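/- (Claim 2 in the proof of Theorem 1, regime R2.) Suppose θ̄_K < μ°, where μ° is the mean of F. Let {(q_i, μ_i)}_{i∈[K+1]} be an implementable direct mechanism (its posterior-mean CDF H satisfies ∫₀ʸ H ≤ ∫₀ʸ F for all y ∈ [0,M] with equality at y = M) with μ_i ∈ Θ̄_i for each i ∈ [K], μ_{K+1} ≥ μ°, and q_{K+1} > 0. If q_j > 0 for some j < K, then there exists an implementable direct mechanism {(q′_i, μ_i)}_{i∈[K+1]} with the same posterior means μ₁, …, μ_{K+1} and with q′_{K+1} < q_{K+1}; in particular no mechanism with q_j > 0 for some j < K is optimal for minimizing q_{K+1}. -/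

import Mathlib

open Set

lemma integral_ite_step (c y : ℝ) (hc : 0 ≤ c) (hy : 0 ≤ y) :
    ∫ t in (0:ℝ)..y, (if c ≤ t then (1:ℝ) else 0) = max (y - c) 0 := by
  have heq : (fun t => if c ≤ t then (1:ℝ) else 0)
      = Set.indicator (Set.Ici c) (fun _ => (1:ℝ)) := by
    funext t; by_cases h : c ≤ t <;> simp [Set.indicator_apply, h]
  rw [intervalIntegral.integral_of_le hy, heq,
    MeasureTheory.setIntegral_indicator measurableSet_Ici,
    MeasureTheory.setIntegral_const, smul_eq_mul, mul_one]
  rcases eq_or_lt_of_le hc with h0 | h0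
  · rw [← h0]
    have h1 : Set.Ioc (0:ℝ) y ∩ Set.Ici 0 = Set.Ioc 0 y := by
      apply Set.inter_eq_left.mpr
      intro t ht; exact le_of_lt ht.1
    rw [h1, MeasureTheory.measureReal_def, Real.volume_Ioc, sub_zero, ENNReal.toReal_ofReal hy]
    exact (max_eq_left hy).symm
  · have h1 : Set.Ioc (0:ℝ) y ∩ Set.Ici c = Set.Icc c y := by
      ext t
      simp only [Set.mem_inter_iff, Set.mem_Ioc, Set.mem_Ici, Set.mem_Icc]
      constructor
      · rintro ⟨⟨_, h2⟩, h3⟩; exact ⟨h3, h2⟩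
      · rintro ⟨h1, h2⟩; exact ⟨⟨lt_of_lt_of_le h0 h1, h2⟩, h1⟩
    rw [h1, MeasureTheory.measureReal_def, Real.volume_Icc]
    rcases le_total c y with h | h
    · rw [ENNReal.toReal_ofReal (by linarith), max_eq_left (by linarith)]
    · rw [ENNReal.ofReal_eq_zero.mpr (by linarith)]
      simp [max_eq_right (by linarith : y - c ≤ 0)]

lemma ite_intervalIntegrable (c y z : ℝ) :
    IntervalIntegrable (fun t => if c ≤ t then (1:ℝ) else 0) MeasureTheory.volume y z := by
  apply Monotone.intervalIntegrable
  intro s t hst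
  dsimp only
  split_ifs with h1 h2
  · exact le_refl 1
  · exact absurd (h1.trans hst) h2
  · norm_num
  · exact le_refl 0

theorem regime_R2_claim2
    (M : ℝ) (hM : 0 < M) (K : ℕ) (hK : 1 ≤ K)
    (F : ℝ → ℝ) (hF_mono : Monotone F)
    (hF_neg : ∀ t < (0:ℝ), F t = 0) (hF_top : ∀ t ≥ M, F t = 1)
    (μ0 : ℝ) (hμ0 : μ0 = ∫ t in (0:ℝ)..M, (1 - F t))
    (lo hi : ℕ → ℝ)
    (hint : ∀ k ∈ Finset.Icc 1 K, 0 ≤ lo k ∧ lo k ≤ hi k ∧ hi k ≤ M)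
    (hsep : ∀ k, 1 ≤ k → k < K → hi k < lo (k+1))
    (hregime : hi K < μ0)
    (q μv : ℕ → ℝ)
    (hq_nonneg : ∀ j ∈ Finset.Icc 1 (K+1), 0 ≤ q j)
    (hq_sum : ∑ j ∈ Finset.Icc 1 (K+1), q j = 1)
    (hμ_range : ∀ j ∈ Finset.Icc 1 (K+1), μv j ∈ Icc (0:ℝ) M)
    (hμ_pref : ∀ i ∈ Finset.Icc 1 K, μv i ∈ Icc (lo i) (hi i))
    (hμ_last : μ0 ≤ μv (K+1))
    (hq_last : 0 < q (K+1))
    (himpl :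
      (∀ y ∈ Icc (0:ℝ) M,
        (∫ t in (0:ℝ)..y,
          ∑ j ∈ Finset.Icc 1 (K+1), q j * (if μv j ≤ t then (1:ℝ) else 0)) ≤
          ∫ t in (0:ℝ)..y, F t) ∧
      (∫ t in (0:ℝ)..M,
        ∑ j ∈ Finset.Icc 1 (K+1), q j * (if μv j ≤ t then (1:ℝ) else 0)) =
        ∫ t in (0:ℝ)..M, F t)
    (j : ℕ) (hj1 : 1 ≤ j) (hjK : j < K) (hqj : 0 < q j) :
    ∃ q' : ℕ → ℝ,
      (∀ i ∈ Finset.Icc 1 (K+1), 0 ≤ q' i) ∧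
      (∑ i ∈ Finset.Icc 1 (K+1), q' i = 1) ∧
      ((∀ y ∈ Icc (0:ℝ) M,
          (∫ t in (0:ℝ)..y,
            ∑ i ∈ Finset.Icc 1 (K+1), q' i * (if μv i ≤ t then (1:ℝ) else 0)) ≤
            ∫ t in (0:ℝ)..y, F t) ∧
        (∫ t in (0:ℝ)..M,
          ∑ i ∈ Finset.Icc 1 (K+1), q' i * (if μv i ≤ t then (1:ℝ) else 0)) =
          ∫ t in (0:ℝ)..M, F t) ∧
      q' (K+1) < q (K+1) := by
  -- memberships
  have hjmem : j ∈ Finset.Icc 1 (K+1) := Finset.mem_Icc.mpr ⟨hj1, by omega⟩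
  have hKmem : K ∈ Finset.Icc 1 (K+1) := Finset.mem_Icc.mpr ⟨hK, by omega⟩
  have hK1mem : K+1 ∈ Finset.Icc 1 (K+1) := Finset.mem_Icc.mpr ⟨by omega, le_refl _⟩
  have hjK' : j ≠ K := by omega
  have hjK1 : j ≠ K+1 := by omega
  have hKK1 : K ≠ K+1 := by omega
  -- ordering of the means
  have hchain : ∀ n, j < n → n ≤ K → hi j < lo n := by
    intro n
    induction n with
    | zero => intro h _; omega
    | succ m ih =>
      intro h1 h2
      rcases Nat.lt_succ_iff_lt_or_eq.mp h1 with h | h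
      · have h3 : hi j < lo m := ih h (by omega)
        have h4 := hint m (Finset.mem_Icc.mpr ⟨by omega, by omega⟩)
        have h5 := hsep m (by omega) (by omega)
        linarith [h4.2.1]
      · subst h
        exact hsep j hj1 (by omega)
  have hμjK : μv j < μv K := by
    have h1 := hμ_pref j (Finset.mem_Icc.mpr ⟨hj1, le_of_lt hjK⟩)
    have h2 := hμ_pref K (Finset.mem_Icc.mpr ⟨hK, le_refl K⟩)
    have h3 := hchain K hjK (le_refl K)
    exact lt_of_le_of_lt h1.2 (lt_of_lt_of_le h3 h2.1)
  have hμKK1 : μv K < μv (K+1) := by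
    have h2 := hμ_pref K (Finset.mem_Icc.mpr ⟨hK, le_refl K⟩)
    linarith [h2.2]
  set a : ℝ := μv K - μv j with ha_def
  set b : ℝ := μv (K+1) - μv K with hb_def
  have ha : 0 < a := by simp only [ha_def]; linarith
  have hb : 0 < b := by simp only [hb_def]; linarith
  set δ : ℝ := min (q j / b) (q (K+1) / a) with hδ_def
  have hδ : 0 < δ := lt_min (div_pos hqj hb) (div_pos hq_last ha)
  have hδb : δ * b ≤ q j := by
    have : δ ≤ q j / b := min_le_left _ _
    calc δ * b ≤ (q j / b) * b := by nlinarith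
    _ = q j := div_mul_cancel₀ _ (ne_of_gt hb)
  have hδa : δ * a ≤ q (K+1) := by
    have : δ ≤ q (K+1) / a := min_le_right _ _
    calc δ * a ≤ (q (K+1) / a) * a := by nlinarith
    _ = q (K+1) := div_mul_cancel₀ _ (ne_of_gt ha)
  -- the new mechanism
  set q' : ℕ → ℝ := fun i =>
    if i = j then q j - δ * b
    else if i = K then q K + δ * (a + b)
    else if i = K+1 then q (K+1) - δ * a
    else q i with hq'_def
  have hq'j : q' j = q j - δ * b := by simp [hq'_def]
  have hq'K : q' K = q K + δ * (a + b) := by simp [hq'_def, hjK'.symm]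
  have hq'K1 : q' (K+1) = q (K+1) - δ * a := by
    simp only [hq'_def]
    rw [if_neg (by omega : ¬ K + 1 = j), if_neg (by omega : ¬ K + 1 = K)]
    simp
  -- key splitting identity
  have hsplit : ∀ f : ℕ → ℝ,
      ∑ i ∈ Finset.Icc 1 (K+1), q' i * f i
      = (∑ i ∈ Finset.Icc 1 (K+1), q i * f i)
        + δ * ((a + b) * f K - b * f j - a * f (K+1)) := by
    intro f
    have hterm : ∀ i, q' i * f i = q i * f i
        + ((if i = K then δ * (a+b) * f i else 0)
          - (if i = j then δ * b * f i else 0)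
          - (if i = K+1 then δ * a * f i else 0)) := by
      intro i
      by_cases h1 : i = j
      · subst h1
        rw [hq'j, if_neg hjK', if_pos rfl, if_neg hjK1]; ring
      · by_cases h2 : i = K
        · subst h2
          rw [hq'K, if_pos rfl, if_neg h1, if_neg hKK1]; ring
        · by_cases h3 : i = K+1
          · subst h3
            rw [hq'K1, if_neg h2, if_neg h1, if_pos rfl]; ring
          · have : q' i = q i := by simp [hq'_def, h1, h2, h3]
            rw [this, if_neg h2, if_neg h1, if_neg h3]; ring
    rw [Finset.sum_congr rfl (fun i _ => hterm i), Finset.sum_add_distrib,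
      Finset.sum_sub_distrib, Finset.sum_sub_distrib,
      Finset.sum_ite_eq' _ K (fun i => δ * (a+b) * f i),
      Finset.sum_ite_eq' _ j (fun i => δ * b * f i),
      Finset.sum_ite_eq' _ (K+1) (fun i => δ * a * f i),
      if_pos hKmem, if_pos hjmem, if_pos hK1mem]
    ring
  -- nonnegativity
  have hq'_nonneg : ∀ i ∈ Finset.Icc 1 (K+1), 0 ≤ q' i := by
    intro i hi'
    by_cases h1 : i = j
    · rw [h1, hq'j]; linarith
    · by_cases h2 : i = K
      · rw [h2, hq'K]
        have h4 := hq_nonneg K hKmem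
        nlinarith
      · by_cases h3 : i = K+1
        · rw [h3, hq'K1]; linarith
        · have : q' i = q i := by simp [hq'_def, h1, h2, h3]
          rw [this]; exact hq_nonneg i hi'
  -- sum equals one
  have hq'_sum : ∑ i ∈ Finset.Icc 1 (K+1), q' i = 1 := by
    have h := hsplit (fun _ => 1)
    simp only [mul_one] at h
    rw [h, hq_sum]; ring
  -- integral formula
  have hint_eq : ∀ (r : ℕ → ℝ) (y : ℝ), 0 ≤ y →
      (∫ t in (0:ℝ)..y, ∑ i ∈ Finset.Icc 1 (K+1), r i * (if μv i ≤ t then (1:ℝ) else 0))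
      = ∑ i ∈ Finset.Icc 1 (K+1), r i * max (y - μv i) 0 := by
    intro r y hy
    rw [intervalIntegral.integral_finset_sum]
    · apply Finset.sum_congr rfl
      intro i hi'
      rw [intervalIntegral.integral_const_mul,
        integral_ite_step (μv i) y (hμ_range i hi').1 hy]
    · intro i hi'
      exact (ite_intervalIntegrable (μv i) 0 y).const_mul (r i)
  -- the correction term is ≤ 0, and = 0 at M
  have hkey : ∀ y : ℝ, (a + b) * max (y - μv K) 0
      ≤ b * max (y - μv j) 0 + a * max (y - μv (K+1)) 0 := by
    intro y
    rcases le_or_gt y (μv K) with h | h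
    · rw [max_eq_right (by linarith)]
      have h1 := mul_nonneg hb.le (le_max_right (y - μv j) 0)
      have h2 := mul_nonneg ha.le (le_max_right (y - μv (K+1)) 0)
      nlinarith
    · rw [max_eq_left (by linarith)]
      have h1 : b * (y - μv j) ≤ b * max (y - μv j) 0 :=
        mul_le_mul_of_nonneg_left (le_max_left _ _) hb.le
      have h2 : a * (y - μv (K+1)) ≤ a * max (y - μv (K+1)) 0 :=
        mul_le_mul_of_nonneg_left (le_max_left _ _) ha.le
      have hid : (a + b) * (y - μv K) = b * (y - μv j) + a * (y - μv (K+1)) := by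
        simp only [ha_def, hb_def]; ring
      linarith
  have hkeyM : (a + b) * max (M - μv K) 0
      - b * max (M - μv j) 0 - a * max (M - μv (K+1)) 0 = 0 := by
    have h1 := (hμ_range j hjmem).2
    have h2 := (hμ_range K hKmem).2
    have h3 := (hμ_range (K+1) hK1mem).2
    rw [max_eq_left (by linarith), max_eq_left (by linarith), max_eq_left (by linarith)]
    simp only [ha_def, hb_def]; ring
  refine ⟨q', hq'_nonneg, hq'_sum, ⟨?_, ?_⟩, ?_⟩
  · intro y hy
    rw [hint_eq q' y hy.1]
    rw [hsplit (fun i => max (y - μv i) 0)]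
    have hH := himpl.1 y hy
    rw [hint_eq q y hy.1] at hH
    have hcorr : δ * ((a + b) * max (y - μv K) 0 - b * max (y - μv j) 0
        - a * max (y - μv (K+1)) 0) ≤ 0 :=
      mul_nonpos_of_nonneg_of_nonpos hδ.le (by linarith [hkey y])
    linarith
  · rw [hint_eq q' M hM.le, hsplit (fun i => max (M - μv i) 0), hkeyM, mul_zero, add_zero,
      ← hint_eq q M hM.le]
    exact himpl.2
  · rw [hq'K1]
    have : 0 < δ * a := mul_pos hδ ha
    linarith
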